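/- Let J ≥ 4. Let A₀ be the J×J tridiagonal matrix with stencil (−1, 2, −1), i.e., (A₀)_{ii} = 2, (A₀)_{i,i±1} = −1, all other entries 0, and let B₀ be the J×J pentadiagonal matrix with stencil (1, −4, 6, −4, 1), i.e., (B₀)_{ii} = 6, (B₀)_{i,i±1} = −4, (B₀)_{i,i±2} = 1, all other entries 0. Then B₀ = A₀² + E, where E is the J×J matrix with E_{11} = E_{JJ} = 1 and all other entries 0. Consequently, for every x ∈ ℝ^J, ⟨B₀ x, x⟩ = ‖A₀ x‖₂² + x₁² + x_J² ≥ ‖A₀ x‖₂² ≥ ⟨A₀² x, x⟩. -/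
import Mathlib

open Matrix

/-- The `J×J` tridiagonal matrix with stencil `(−1, 2, −1)`. -/
def A0 (J : ℕ) : Matrix (Fin J) (Fin J) ℝ :=
  Matrix.of fun i j =>
    if i = j then 2
    else if (i : ℕ) + 1 = (j : ℕ) ∨ (j : ℕ) + 1 = (i : ℕ) then -1
    else 0

/-- The `J×J` pentadiagonal matrix with stencil `(1, −4, 6, −4, 1)`. -/
def B0 (J : ℕ) : Matrix (Fin J) (Fin J) ℝ :=
  Matrix.of fun i j =>
    if i = j then 6
    else if (i : ℕ) + 1 = (j : ℕ) ∨ (j : ℕ) + 1 = (i : ℕ) then -4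
    else if (i : ℕ) + 2 = (j : ℕ) ∨ (j : ℕ) + 2 = (i : ℕ) then 1
    else 0

/-- The `J×J` matrix with `E_{11} = E_{JJ} = 1` and all other entries `0`. -/
def Ecorner (J : ℕ) : Matrix (Fin J) (Fin J) ℝ :=
  Matrix.of fun i j =>
    if i = j ∧ ((i : ℕ) = 0 ∨ (i : ℕ) = J - 1) then 1 else 0

/-- Shift matrix. -/
noncomputable def Sm (J : ℕ) : Matrix (Fin J) (Fin J) ℝ :=
  Matrix.of fun i j => if (i : ℕ) + 1 = (j : ℕ) then 1 else 0

/-- Double shift matrix. -/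
noncomputable def S2m (J : ℕ) : Matrix (Fin J) (Fin J) ℝ :=
  Matrix.of fun i j => if (i : ℕ) + 2 = (j : ℕ) then 1 else 0

noncomputable def D0m (J : ℕ) : Matrix (Fin J) (Fin J) ℝ :=
  Matrix.of fun i j => if i = j ∧ (i : ℕ) = 0 then 1 else 0

noncomputable def DJm (J : ℕ) : Matrix (Fin J) (Fin J) ℝ :=
  Matrix.of fun i j => if i = j ∧ (i : ℕ) = J - 1 then 1 else 0

lemma sum_ite_fin (J n : ℕ) (f : Fin J → ℝ) :
    ∑ k : Fin J, (if (k : ℕ) = n then f k else 0)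
      = if h : n < J then f ⟨n, h⟩ else 0 := by
  split_ifs with h
  · rw [Fintype.sum_eq_single (⟨n, h⟩ : Fin J)]
    · simp
    · intro k hk
      rw [if_neg]
      intro hkn
      exact hk (Fin.ext hkn)
  · apply Finset.sum_eq_zero
    intro k _
    rw [if_neg]
    intro hkn
    have := k.isLt; omega

lemma sum_ite_fin' (J n : ℕ) (Q : Prop) [Decidable Q] (c : ℝ) :
    ∑ k : Fin J, (if (k : ℕ) = n ∧ Q then c else 0)
      = if n < J ∧ Q then c else 0 := by
  by_cases hQ : Q
  · simp only [hQ, and_true]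
    rw [sum_ite_fin J n (fun _ => c)]
    split_ifs <;> simp_all
  · simp [hQ]

lemma ofNat_apply (J m : ℕ) [m.AtLeastTwo] (i j : Fin J) :
    (OfNat.ofNat m : Matrix (Fin J) (Fin J) ℝ) i j
      = if i = j then (OfNat.ofNat m : ℝ) else 0 := by
  rw [← Nat.cast_ofNat (R := Matrix (Fin J) (Fin J) ℝ), ← Matrix.diagonal_natCast,
    Matrix.diagonal_apply]
  norm_num

lemma hA_eq (J : ℕ) : A0 J = 2 - Sm J - (Sm J)ᵀ := by
  ext i j
  simp only [A0, Sm, Matrix.of_apply, Matrix.sub_apply, Matrix.transpose_apply,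
    ofNat_apply, Fin.ext_iff]
  split_ifs <;> first | omega | norm_num

lemma hS2_eq (J : ℕ) : Sm J * Sm J = S2m J := by
  ext i j
  rw [Matrix.mul_apply]
  have h : ∀ k : Fin J, Sm J i k * Sm J k j
      = if (k : ℕ) = (i : ℕ) + 1 ∧ (i : ℕ) + 2 = (j : ℕ) then (1:ℝ) else 0 := by
    intro k
    simp only [Sm, Matrix.of_apply]
    split_ifs <;> first | omega | norm_num
  rw [Finset.sum_congr rfl (fun k _ => h k), sum_ite_fin']
  have := j.isLt
  simp only [S2m, Matrix.of_apply]
  split_ifs <;> first | rfl | omega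

lemma hSSt_eq (J : ℕ) : Sm J * (Sm J)ᵀ = 1 - DJm J := by
  ext i j
  rw [Matrix.mul_apply]
  have h : ∀ k : Fin J, Sm J i k * (Sm J)ᵀ k j
      = if (k : ℕ) = (i : ℕ) + 1 ∧ (i : ℕ) = (j : ℕ) then (1:ℝ) else 0 := by
    intro k
    simp only [Sm, Matrix.of_apply, Matrix.transpose_apply]
    split_ifs <;> first | omega | norm_num
  rw [Finset.sum_congr rfl (fun k _ => h k), sum_ite_fin']
  have := i.isLt
  simp only [Matrix.sub_apply, Matrix.one_apply, DJm, Matrix.of_apply, Fin.ext_iff]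
  split_ifs <;> first | omega | norm_num

lemma hStS_eq (J : ℕ) : (Sm J)ᵀ * Sm J = 1 - D0m J := by
  ext i j
  rw [Matrix.mul_apply]
  have h : ∀ k : Fin J, (Sm J)ᵀ i k * Sm J k j
      = if (k : ℕ) = (i : ℕ) - 1 ∧ (1 ≤ (i : ℕ) ∧ (i : ℕ) = (j : ℕ)) then (1:ℝ) else 0 := by
    intro k
    simp only [Sm, Matrix.of_apply, Matrix.transpose_apply]
    split_ifs <;> first | omega | norm_num
  rw [Finset.sum_congr rfl (fun k _ => h k), sum_ite_fin']
  have := i.isLt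
  simp only [Matrix.sub_apply, Matrix.one_apply, D0m, Matrix.of_apply, Fin.ext_iff]
  split_ifs <;> first | omega | norm_num

lemma hE_eq (J : ℕ) (hJ : 4 ≤ J) : Ecorner J = D0m J + DJm J := by
  ext i j
  simp only [Ecorner, D0m, DJm, Matrix.of_apply, Matrix.add_apply, Fin.ext_iff]
  have := i.isLt
  split_ifs <;> first | omega | norm_num

lemma hB_eq (J : ℕ) : B0 J = 6 - 4 • Sm J - 4 • (Sm J)ᵀ + S2m J + (S2m J)ᵀ := by
  ext i j
  simp only [B0, Sm, S2m, Matrix.of_apply, Matrix.sub_apply, Matrix.add_apply,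
    Matrix.smul_apply, Matrix.transpose_apply, ofNat_apply, Fin.ext_iff, smul_ite]
  split_ifs <;> first | omega | norm_num [nsmul_eq_mul]

lemma expand_sq {R : Type} [Ring R] (S T : R) :
    (2 - S - T) * (2 - S - T) = 4 - 4 • S - 4 • T + S * S + S * T + T * S + T * T := by
  noncomm_ring
  try simp [nsmul_eq_mul]
  try norm_num
  try abel

lemma B0_eq (J : ℕ) (hJ : 4 ≤ J) : B0 J = (A0 J)^2 + Ecorner J := by
  have hTT : (Sm J)ᵀ * (Sm J)ᵀ = (S2m J)ᵀ := by
    rw [← Matrix.transpose_mul, hS2_eq]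
  rw [pow_two, hA_eq, expand_sq, hS2_eq, hSSt_eq, hStS_eq, hTT, hE_eq J hJ, hB_eq]
  have h6 : (6 : Matrix (Fin J) (Fin J) ℝ) = 4 + 1 + 1 := by norm_num
  rw [h6]
  abel

/-- `B₀ = A₀² + E` and consequently
`⟨B₀x, x⟩ = ‖A₀x‖₂² + x₁² + x_J² ≥ ‖A₀x‖₂² ≥ ⟨A₀²x, x⟩`. -/
theorem pentadiagonal_eq_square_tridiagonal (J : ℕ) (hJ : 4 ≤ J) :
    B0 J = (A0 J)^2 + Ecorner J ∧
    ∀ x : Fin J → ℝ,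
      (∑ i, (B0 J).mulVec x i * x i
        = ∑ i, ((A0 J).mulVec x i)^2 + (x ⟨0, by omega⟩)^2 + (x ⟨J - 1, by omega⟩)^2) ∧
      (∑ i, ((A0 J).mulVec x i)^2 ≤ ∑ i, (B0 J).mulVec x i * x i) ∧
      (∑ i, ((A0 J)^2).mulVec x i * x i ≤ ∑ i, ((A0 J).mulVec x i)^2) := by
  have hBE := B0_eq J hJ
  have hAT : (A0 J)ᵀ = A0 J := by
    ext i j
    simp only [Matrix.transpose_apply, A0, Matrix.of_apply, Fin.ext_iff]
    split_ifs <;> first | rfl | omega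
  refine ⟨hBE, fun x => ?_⟩
  have hsq : ∑ i, ((A0 J)^2).mulVec x i * x i = ∑ i, ((A0 J).mulVec x i)^2 := by
    have h1 : (((A0 J)^2).mulVec x) ⬝ᵥ x = ((A0 J).mulVec x) ⬝ᵥ ((A0 J).mulVec x) := by
      rw [pow_two, ← Matrix.mulVec_mulVec, dotProduct_comm,
        Matrix.dotProduct_mulVec, ← Matrix.mulVec_transpose, hAT]
    simpa [dotProduct, pow_two] using h1
  have hEsum : ∑ i, (Ecorner J).mulVec x i * x i
      = (x ⟨0, by omega⟩)^2 + (x ⟨J - 1, by omega⟩)^2 := by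
    have hmv : ∀ i : Fin J, (Ecorner J).mulVec x i
        = (if (i : ℕ) = 0 then x i else 0) + (if (i : ℕ) = J - 1 then x i else 0) := by
      intro i
      rw [Matrix.mulVec, dotProduct]
      have h : ∀ j : Fin J, Ecorner J i j * x j
          = (if (j : ℕ) = (i : ℕ) ∧ (i : ℕ) = 0 then x j else 0)
            + (if (j : ℕ) = (i : ℕ) ∧ (i : ℕ) = J - 1 then x j else 0) := by
        intro j
        simp only [Ecorner, Matrix.of_apply, Fin.ext_iff]
        have := i.isLt
        split_ifs <;> first | omega | norm_num
      rw [Finset.sum_congr rfl (fun j _ => h j), Finset.sum_add_distrib]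
      have e1 : ∀ (Q : Prop) [Decidable Q],
          ∑ j : Fin J, (if (j : ℕ) = (i : ℕ) ∧ Q then x j else 0)
            = if Q then x i else 0 := by
        intro Q _
        have : ∀ j : Fin J, (if (j : ℕ) = (i : ℕ) ∧ Q then x j else 0)
            = if (j : ℕ) = (i : ℕ) then (if Q then x j else 0) else 0 := by
          intro j; split_ifs <;> simp_all
        rw [Finset.sum_congr rfl (fun j _ => this j), sum_ite_fin]
        rw [dif_pos i.isLt]
      rw [e1, e1]
    simp only [hmv, add_mul, ite_mul, zero_mul]
    rw [Finset.sum_add_distrib, sum_ite_fin J 0 (fun i => x i * x i),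
      sum_ite_fin J (J-1) (fun i => x i * x i), dif_pos (by omega : 0 < J),
      dif_pos (by omega : J - 1 < J)]
    ring
  have hmain : ∑ i, (B0 J).mulVec x i * x i
      = ∑ i, ((A0 J).mulVec x i)^2 + (x ⟨0, by omega⟩)^2 + (x ⟨J - 1, by omega⟩)^2 := by
    have : ∀ i : Fin J, (B0 J).mulVec x i
        = ((A0 J)^2).mulVec x i + (Ecorner J).mulVec x i := by
      intro i
      rw [hBE, Matrix.add_mulVec]
      rfl
    simp only [this, add_mul]
    rw [Finset.sum_add_distrib, hsq, hEsum]
    ring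
  refine ⟨hmain, ?_, le_of_eq hsq⟩
  rw [hmain]
  nlinarith [sq_nonneg (x ⟨0, by omega⟩), sq_nonneg (x ⟨J - 1, by omega⟩)]
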